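/- arXiv:1308.6689 — 7 statements merged into one kernel-verified Lean document; each statement's English description precedes it below -/
import Mathlib

section
/- Let G be a nontrivial connected graph of order n. Then the local metric dimension of G equals 1 if and only if G is bipartite. -/
open SimpleGraph

/-- A set `S` is a local metric generator for `G` if every pair of adjacent
vertices is distinguished (by distance) by some element of `S`. -/
def IsLocalMetricGenerator {α : Type*} (G : SimpleGraph α) (S : Set α) : Prop :=
  ∀ x y : α, G.Adj x y → ∃ v ∈ S, G.dist v x ≠ G.dist v y

/-- The local metric dimension of a graph. -/
noncomputable def localMetricDim {α : Type*} (G : SimpleGraph α) : ℕ :=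
  sInf {k | ∃ S : Finset α, S.card = k ∧ IsLocalMetricGenerator G ↑S}

/-- A local metric basis: a minimum-cardinality local metric generator. -/
def IsLocalMetricBasis {α : Type*} (G : SimpleGraph α) (S : Finset α) : Prop :=
  IsLocalMetricGenerator G ↑S ∧ S.card = localMetricDim G

/-- The corona product `G ⊙ H`. -/
def corona {α β : Type*} (G : SimpleGraph α) (H : SimpleGraph β) :
    SimpleGraph (α ⊕ α × β) :=
  SimpleGraph.fromRel (fun x y => match x, y with
    | Sum.inl a, Sum.inl a' => G.Adj a a'
    | Sum.inl a, Sum.inr p => a = p.1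
    | Sum.inr p, Sum.inl a => a = p.1
    | Sum.inr p, Sum.inr q => p.1 = q.1 ∧ H.Adj p.2 q.2)

/-- The join `K₁ + H`; the vertex of `K₁` is `none`. -/
def joinK1 {β : Type*} (H : SimpleGraph β) : SimpleGraph (Option β) :=
  SimpleGraph.fromRel (fun x y => match x, y with
    | none, some _ => True
    | some b, some b' => H.Adj b b'
    | _, _ => False)

/-- Eccentricity of a vertex (in `ℕ∞`). -/
noncomputable def ecc {α : Type*} (G : SimpleGraph α) (x : α) : ℕ∞ :=
  ⨆ y, G.edist x y

/-- Radius of a graph (in `ℕ∞`). -/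
noncomputable def gradius {α : Type*} (G : SimpleGraph α) : ℕ∞ :=
  ⨅ x, ecc G x

/-- Diameter of a graph (in `ℕ∞`). -/
noncomputable def gdiam {α : Type*} (G : SimpleGraph α) : ℕ∞ :=
  ⨆ x, ecc G x

/-- Parity of a walk in a 2-colored graph. -/
lemma walk_parity {α : Type*} {G : SimpleGraph α} (c : G.Coloring (ZMod 2)) {u w : α}
    (p : G.Walk u w) : (p.length : ZMod 2) = c u + c w := by
  induction p with
  | nil => simp [CharTwo.add_self_eq_zero]
  | @cons u v w h q ih =>
    have hne : c u ≠ c v := c.valid h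
    have h1 : c u + c v = 1 := by
      revert hne; generalize c u = a; generalize c v = b; revert a b; decide
    simp only [SimpleGraph.Walk.length_cons]
    push_cast
    rw [ih]
    have key : ∀ a b d : ZMod 2, a + b = 1 → b + d + 1 = a + d := by decide
    exact key _ _ _ h1

/-- For a nontrivial connected graph `G`, `dim_l G = 1` iff `G` is bipartite. -/
theorem stmt0 {α : Type*} [Fintype α] (G : SimpleGraph α) (hG : G.Connected)
    (hnt : Nontrivial α) :
    localMetricDim G = 1 ↔ G.Colorable 2 := by
  classical
  set T : Set ℕ := {k | ∃ S : Finset α, S.card = k ∧ IsLocalMetricGenerator G ↑S} with hT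
  -- the full vertex set is a generator
  have huniv : IsLocalMetricGenerator G (↑(Finset.univ : Finset α)) := by
    intro x y hxy
    refine ⟨x, by simp, ?_⟩
    rw [SimpleGraph.dist_self]
    exact fun h => (hG.pos_dist_of_ne hxy.ne).ne' h.symm
  have hne : T.Nonempty := ⟨_, Finset.univ, rfl, huniv⟩
  -- there is an edge, so the empty set is not a generator, i.e. 0 ∉ T
  have h0 : (0 : ℕ) ∉ T := by
    rintro ⟨S, hS, hgen⟩
    rw [Finset.card_eq_zero] at hS
    subst hS
    obtain ⟨x, y, hxy⟩ := hnt
    obtain ⟨p, -⟩ := hG.exists_walk_length_eq_dist x y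
    cases p with
    | nil => exact hxy rfl
    | cons h q =>
      obtain ⟨v, hv, -⟩ := hgen _ _ h
      simp at hv
  constructor
  · -- dim = 1 → bipartite
    intro hdim
    have h1 : (1 : ℕ) ∈ T := hdim ▸ Nat.sInf_mem hne
    obtain ⟨S, hS, hgen⟩ := h1
    obtain ⟨v, rfl⟩ := Finset.card_eq_one.mp hS
    -- color by parity of distance to v
    have hvalid : ∀ x y : α, G.Adj x y →
        ((G.dist v x : ZMod 2) ≠ (G.dist v y : ZMod 2)) := by
      intro x y hxy
      obtain ⟨w, hw, hd⟩ := hgen x y hxy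
      simp only [Finset.coe_singleton, Set.mem_singleton_iff] at hw
      subst hw
      have hd1 : G.dist x y ≤ 1 := by
        simpa using SimpleGraph.dist_le (SimpleGraph.Walk.cons hxy SimpleGraph.Walk.nil)
      have hd2 : G.dist y x ≤ 1 := by
        simpa using SimpleGraph.dist_le (SimpleGraph.Walk.cons hxy.symm SimpleGraph.Walk.nil)
      have t1 : G.dist w y ≤ G.dist w x + 1 :=
        le_trans (hG.dist_triangle : G.dist w y ≤ G.dist w x + G.dist x y) (by omega)
      have t2 : G.dist w x ≤ G.dist w y + 1 :=
        le_trans (hG.dist_triangle : G.dist w x ≤ G.dist w y + G.dist y x) (by omega)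
      -- the distances differ by exactly 1
      have : G.dist w y = G.dist w x + 1 ∨ G.dist w x = G.dist w y + 1 := by omega
      rcases this with h | h <;> rw [h] <;> push_cast <;>
        · generalize ((_ : ℕ) : ZMod 2) = a; revert a; decide
    have coloring : G.Coloring (ZMod 2) :=
      SimpleGraph.Coloring.mk (fun x => (G.dist v x : ZMod 2))
        (fun {x y} h => hvalid x y h)
    have := coloring.colorable
    simpa using this
  · -- bipartite → dim = 1
    intro hcol
    have c : G.Coloring (ZMod 2) := hcol.some
    obtain ⟨v, -, -⟩ := hnt
    have h1 : (1 : ℕ) ∈ T := by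
      refine ⟨{v}, Finset.card_singleton v, ?_⟩
      intro x y hxy
      refine ⟨v, by simp, ?_⟩
      obtain ⟨p, hp⟩ := hG.exists_walk_length_eq_dist v x
      obtain ⟨q, hq⟩ := hG.exists_walk_length_eq_dist v y
      have hpx : (G.dist v x : ZMod 2) = c v + c x := by rw [← hp]; exact walk_parity c p
      have hpy : (G.dist v y : ZMod 2) = c v + c y := by rw [← hq]; exact walk_parity c q
      intro hEq
      apply c.valid hxy
      have : c v + c x = c v + c y := by rw [← hpx, ← hpy, hEq]
      exact add_left_cancel this
    have hle : localMetricDim G ≤ 1 := Nat.sInf_le h1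
    have hmem : localMetricDim G ∈ T := Nat.sInf_mem hne
    have hpos : localMetricDim G ≠ 0 := fun h => h0 (h ▸ hmem)
    omega
end

section
/- Let G be a nontrivial connected graph of order n. Then dim_l(G) = n − 1 if and only if G is the complete graph K_n. -/
open SimpleGraph

lemma gen_of_mem {α : Type*} (G : SimpleGraph α) (hG : G.Connected) (S : Finset α)
    (h : ∀ x y : α, G.Adj x y → x ∈ S ∨ y ∈ S) : IsLocalMetricGenerator G ↑S := by
  intro x y hxy
  rcases h x y hxy with hx | hy
  · refine ⟨x, hx, ?_⟩
    rw [SimpleGraph.dist_self]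
    exact fun h => (hG.dist_eq_zero_iff).not.mpr hxy.ne h.symm
  · refine ⟨y, hy, ?_⟩
    rw [SimpleGraph.dist_self]
    exact (hG.dist_eq_zero_iff).not.mpr hxy.ne.symm

/-- For a nontrivial connected graph `G` of order `n`, `dim_l G = n - 1` iff
`G` is the complete graph. -/
theorem stmt1 {α : Type*} [Fintype α] (G : SimpleGraph α) (hG : G.Connected)
    (hnt : Nontrivial α) :
    localMetricDim G = Fintype.card α - 1 ↔ G = ⊤ := by
  classical
  have hn : 2 ≤ Fintype.card α := Fintype.one_lt_card
  constructor
  · intro hdim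
    by_contra hne
    -- there exist non-adjacent distinct u v
    have : ∃ u v : α, u ≠ v ∧ ¬ G.Adj u v := by
      by_contra h
      push_neg at h
      apply hne
      ext u v
      simp only [SimpleGraph.top_adj]
      exact ⟨fun h' => h'.ne, fun h' => h u v h'⟩
    obtain ⟨u, v, huv, hadj⟩ := this
    set S : Finset α := Finset.univ \ {u, v} with hS
    have hcard : S.card = Fintype.card α - 2 := by
      rw [hS, Finset.card_sdiff_of_subset (by simp)]
      simp [Finset.card_insert_of_notMem, huv]
    have hgen : IsLocalMetricGenerator G ↑S := by
      apply gen_of_mem G hG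
      intro x y hxy
      by_contra h
      push_neg at h
      have hx : x = u ∨ x = v := by
        have := h.1; simp [hS] at this; tauto
      have hy : y = u ∨ y = v := by
        have := h.2; simp [hS] at this; tauto
      rcases hx with rfl | rfl <;> rcases hy with rfl | rfl
      · exact hxy.ne rfl
      · exact hadj hxy
      · exact hadj hxy.symm
      · exact hxy.ne rfl
    have hle : localMetricDim G ≤ Fintype.card α - 2 :=
      Nat.sInf_le ⟨S, hcard, hgen⟩
    omega
  · intro htop
    subst htop
    have hub : (Fintype.card α - 1) ∈
        {k | ∃ S : Finset α, S.card = k ∧ IsLocalMetricGenerator (⊤ : SimpleGraph α) ↑S} := by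
      obtain ⟨u⟩ := (inferInstance : Nonempty α)
      refine ⟨Finset.univ \ {u}, by simp [Finset.card_sdiff_of_subset], ?_⟩
      apply gen_of_mem _ hG
      intro x y hxy
      by_contra h
      push_neg at h
      have hx : x = u := by have := h.1; simpa using this
      have hy : y = u := by have := h.2; simpa using this
      exact hxy.ne (hx.trans hy.symm)
    have hlb : ∀ k ∈ {k | ∃ S : Finset α, S.card = k ∧
        IsLocalMetricGenerator (⊤ : SimpleGraph α) ↑S}, Fintype.card α - 1 ≤ k := by
      rintro k ⟨S, rfl, hgen⟩
      by_contra h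
      push_neg at h
      have h2 : 2 ≤ (Finset.univ \ S).card := by
        rw [Finset.card_sdiff_of_subset (Finset.subset_univ _), Finset.card_univ]
        omega
      obtain ⟨u, hu, v, hv, huv⟩ := Finset.one_lt_card.mp h2
      simp only [Finset.mem_sdiff, Finset.mem_univ, true_and] at hu hv
      obtain ⟨w, hw, hdist⟩ := hgen u v (by simp [huv])
      apply hdist
      have hwu : w ≠ u := fun h => hu (h ▸ hw)
      have hwv : w ≠ v := fun h => hv (h ▸ hw)
      rw [SimpleGraph.dist_eq_one_iff_adj.mpr (by simp [hwu]),
        SimpleGraph.dist_eq_one_iff_adj.mpr (by simp [hwv])]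
    exact le_antisymm (Nat.sInf_le hub) (le_csInf ⟨_, hub⟩ hlb)
end

section
/- For any connected nontrivial graph G and any empty (edgeless) graph H, dim_l(G ⊙ H) = dim_l(G). -/
open SimpleGraph

section Aux

variable {α β : Type*} (G : SimpleGraph α)

/-- Projection of corona vertices back to `G`. -/
def coronaProj : α ⊕ α × β → α := Sum.elim id Prod.fst

lemma corona_adj_inl_inl {a a' : α} :
    (corona G (⊥ : SimpleGraph β)).Adj (Sum.inl a) (Sum.inl a') ↔ G.Adj a a' := by
  rw [corona, fromRel_adj]
  constructor
  · rintro ⟨-, h | h⟩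
    · exact h
    · exact h.symm
  · intro h
    exact ⟨by simp [h.ne], Or.inl h⟩

lemma corona_adj_inr {p : α × β} {u : α ⊕ α × β}
    (h : (corona G (⊥ : SimpleGraph β)).Adj (Sum.inr p) u) : u = Sum.inl p.1 := by
  rw [corona, fromRel_adj] at h
  obtain ⟨hne, h | h⟩ := h
  · cases u with
    | inl a => simp_all
    | inr q => exact absurd h.2 (fun hh => hh.elim)
  · cases u with
    | inl a => simp_all
    | inr q => exact absurd h.2 (fun hh => hh.elim)

lemma corona_adj_inl_inr {a : α} {p : α × β} :
    (corona G (⊥ : SimpleGraph β)).Adj (Sum.inl a) (Sum.inr p) ↔ a = p.1 := by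
  constructor
  · intro h
    have := corona_adj_inr G h.symm
    simpa using this
  · intro h
    rw [corona, fromRel_adj]
    exact ⟨by simp, Or.inl h⟩

/-- The embedding of `G` into the corona as a graph hom. -/
def coronaHom : G →g corona G (⊥ : SimpleGraph β) where
  toFun := Sum.inl
  map_rel' := fun h => (corona_adj_inl_inl G).mpr h

lemma corona_adj_down {u v : α ⊕ α × β}
    (h : (corona G (⊥ : SimpleGraph β)).Adj u v) :
    coronaProj u = coronaProj v ∨ G.Adj (coronaProj u) (coronaProj v) := by
  cases u with
  | inl a =>
    cases v with
    | inl a' => exact Or.inr ((corona_adj_inl_inl G).mp h)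
    | inr p => exact Or.inl ((corona_adj_inl_inr G).mp h)
  | inr p =>
    cases v with
    | inl a =>
      have := corona_adj_inr G h
      simp only [Sum.inl.injEq] at this
      exact Or.inl (by simp [coronaProj, this])
    | inr q =>
      have := corona_adj_inr G h
      simp at this

lemma corona_walk_down {u v : α ⊕ α × β}
    (w : (corona G (⊥ : SimpleGraph β)).Walk u v) :
    ∃ w' : G.Walk (coronaProj u) (coronaProj v), w'.length ≤ w.length := by
  induction w with
  | nil => exact ⟨Walk.nil, le_refl _⟩
  | @cons u b v h w ih =>
    obtain ⟨w', hw'⟩ := ih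
    rcases corona_adj_down G h with heq | hadj
    · exact ⟨w'.copy heq.symm rfl, by simpa using hw'.trans (Nat.le_succ _)⟩
    · exact ⟨Walk.cons hadj w', by simpa using Nat.succ_le_succ hw'⟩

variable (hG : G.Connected)
include hG

lemma corona_dist_inl_inl (a a' : α) :
    (corona G (⊥ : SimpleGraph β)).dist (Sum.inl a) (Sum.inl a') = G.dist a a' := by
  apply le_antisymm
  · obtain ⟨p, hp⟩ := (hG a a').exists_walk_length_eq_dist
    calc (corona G (⊥ : SimpleGraph β)).dist (Sum.inl a) (Sum.inl a')
        ≤ (p.map (coronaHom G (β := β))).length := dist_le _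
      _ = G.dist a a' := by rw [Walk.length_map, hp]
  · have hr : (corona G (⊥ : SimpleGraph β)).Reachable (Sum.inl a) (Sum.inl a') :=
      (hG a a').map (coronaHom G (β := β))
    obtain ⟨p, hp⟩ := hr.exists_walk_length_eq_dist
    obtain ⟨w', hw'⟩ := corona_walk_down G p
    calc G.dist a a' ≤ w'.length := dist_le _
      _ ≤ p.length := hw'
      _ = _ := hp

lemma corona_dist_inr_inl (p : α × β) (a : α) :
    (corona G (⊥ : SimpleGraph β)).dist (Sum.inr p) (Sum.inl a) = G.dist p.1 a + 1 := by
  have hadj : (corona G (⊥ : SimpleGraph β)).Adj (Sum.inr p) (Sum.inl p.1) :=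
    ((corona_adj_inl_inr G).mpr rfl).symm
  apply le_antisymm
  · obtain ⟨q, hq⟩ := (hG p.1 a).exists_walk_length_eq_dist
    calc (corona G (⊥ : SimpleGraph β)).dist (Sum.inr p) (Sum.inl a)
        ≤ (Walk.cons hadj (q.map (coronaHom G (β := β)))).length := dist_le _
      _ = G.dist p.1 a + 1 := congrArg (· + 1) ((Walk.length_map _ _).trans hq)
  · have hr : (corona G (⊥ : SimpleGraph β)).Reachable (Sum.inr p) (Sum.inl a) :=
      hadj.reachable.trans ((hG p.1 a).map (coronaHom G (β := β)))
    obtain ⟨w, hw⟩ := hr.exists_walk_length_eq_dist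
    cases w with
    | cons h w' =>
      rename_i b
      have hb : b = Sum.inl p.1 := corona_adj_inr G h
      subst hb
      have h1 : (corona G (⊥ : SimpleGraph β)).dist (Sum.inl p.1) (Sum.inl a) ≤ w'.length :=
        dist_le _
      rw [corona_dist_inl_inl G hG] at h1
      calc G.dist p.1 a + 1 ≤ w'.length + 1 := Nat.add_le_add_right h1 1
        _ = (Walk.cons h w').length := by simp
        _ = _ := hw

end Aux

/-- For a connected nontrivial graph `G` and empty graph `H`,
`dim_l (G ⊙ H) = dim_l G`. -/
theorem stmt3 {α β : Type*} [Fintype α] [Fintype β] (G : SimpleGraph α)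
    (hG : G.Connected) (hnt : Nontrivial α) :
    localMetricDim (corona G (⊥ : SimpleGraph β)) = localMetricDim G := by
  classical
  set C := corona G (⊥ : SimpleGraph β) with hC
  -- G has an edge
  obtain ⟨x₀, y₀, hxy₀⟩ := hnt
  obtain ⟨e1, e2, he⟩ : ∃ a b, G.Adj a b := by
    obtain ⟨w⟩ := hG x₀ y₀
    cases w with
    | nil => exact absurd rfl hxy₀
    | cons h _ => exact ⟨_, _, h⟩
  -- nonemptiness of the defining sets
  have hGne : {k | ∃ S : Finset α, S.card = k ∧ IsLocalMetricGenerator G ↑S}.Nonempty := by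
    refine ⟨(Finset.univ : Finset α).card, Finset.univ, rfl, ?_⟩
    intro x y hxy
    refine ⟨x, by simp, ?_⟩
    rw [dist_self]
    exact fun h => (hxy.reachable.pos_dist_of_ne hxy.ne).ne' h.symm
  have hCne : {k | ∃ S : Finset (α ⊕ α × β), S.card = k ∧ IsLocalMetricGenerator C ↑S}.Nonempty := by
    refine ⟨(Finset.univ : Finset (α ⊕ α × β)).card, Finset.univ, rfl, ?_⟩
    intro x y hxy
    refine ⟨x, by simp, ?_⟩
    rw [dist_self]
    exact fun h => (hxy.reachable.pos_dist_of_ne hxy.ne).ne' h.symm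
  apply le_antisymm
  · -- dim C ≤ dim G
    obtain ⟨S, hScard, hSgen⟩ := Nat.sInf_mem hGne
    obtain ⟨s₀, hs₀S, -⟩ := hSgen e1 e2 he
    refine le_trans (Nat.sInf_le ?_) hScard.le
    refine ⟨S.image Sum.inl, Finset.card_image_of_injective _ Sum.inl_injective, ?_⟩
    intro x y hxy
    cases x with
    | inl a =>
      cases y with
      | inl a' =>
        obtain ⟨v, hvS, hv⟩ := hSgen a a' ((corona_adj_inl_inl G).mp hxy)
        refine ⟨Sum.inl v, Finset.mem_coe.mpr (Finset.mem_image_of_mem _ hvS), ?_⟩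
        rwa [corona_dist_inl_inl G hG, corona_dist_inl_inl G hG]
      | inr p =>
        have hap : a = p.1 := (corona_adj_inl_inr G).mp hxy
        refine ⟨Sum.inl s₀, Finset.mem_coe.mpr (Finset.mem_image_of_mem _ hs₀S), ?_⟩
        rw [corona_dist_inl_inl G hG, dist_comm (G := C), corona_dist_inr_inl G hG,
          dist_comm (G := G), ← hap]
        omega
    | inr p =>
      cases y with
      | inl a =>
        have hap : a = p.1 := by simpa using (corona_adj_inr G hxy)
        refine ⟨Sum.inl s₀, Finset.mem_coe.mpr (Finset.mem_image_of_mem _ hs₀S), ?_⟩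
        rw [corona_dist_inl_inl G hG, dist_comm (G := C), corona_dist_inr_inl G hG,
          dist_comm (G := G), ← hap]
        omega
      | inr q =>
        have := corona_adj_inr G hxy
        simp at this
  · -- dim G ≤ dim C
    obtain ⟨T, hTcard, hTgen⟩ := Nat.sInf_mem hCne
    refine le_trans (Nat.sInf_le (⟨T.image (coronaProj (β := β)), rfl, ?_⟩ :
      _ ∈ {k | ∃ S : Finset α, S.card = k ∧ IsLocalMetricGenerator G ↑S}))
      (le_trans (Finset.card_image_le) hTcard.le)
    intro x y hxy
    obtain ⟨v, hvT, hv⟩ := hTgen (Sum.inl x) (Sum.inl y) ((corona_adj_inl_inl G).mpr hxy)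
    cases v with
    | inl a =>
      refine ⟨a, Finset.mem_coe.mpr (Finset.mem_image_of_mem _ hvT), ?_⟩
      rwa [corona_dist_inl_inl G hG, corona_dist_inl_inl G hG] at hv
    | inr p =>
      refine ⟨p.1, Finset.mem_coe.mpr (Finset.mem_image_of_mem _ hvT), ?_⟩
      · rw [corona_dist_inr_inl G hG, corona_dist_inr_inl G hG] at hv
        omega
end

section
/- Let H be a non-empty graph such that the vertex of K_1 belongs to some local metric basis for the join K_1 + H. Then for any connected graph G of order n ≥ 2, dim_l(G ⊙ H) = n · (dim_l(K_1 + H) − 1). -/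
open SimpleGraph

section Aux
open scoped Classical
variable {α β : Type*}

lemma corona_adj_ll {G : SimpleGraph α} {H : SimpleGraph β} {a a' : α} :
    (corona G H).Adj (Sum.inl a) (Sum.inl a') ↔ G.Adj a a' := by
  simp only [corona, SimpleGraph.fromRel_adj]
  constructor
  · rintro ⟨-, h | h⟩
    · exact h
    · exact h.symm
  · intro h; exact ⟨by simpa using h.ne, Or.inl h⟩

lemma corona_adj_lr {G : SimpleGraph α} {H : SimpleGraph β} {a : α} {p : α × β} :
    (corona G H).Adj (Sum.inl a) (Sum.inr p) ↔ a = p.1 := by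
  simp only [corona, SimpleGraph.fromRel_adj]
  constructor
  · rintro ⟨-, h | h⟩ <;> exact h
  · intro h; exact ⟨by simp, Or.inl h⟩

lemma corona_adj_rl {G : SimpleGraph α} {H : SimpleGraph β} {a : α} {p : α × β} :
    (corona G H).Adj (Sum.inr p) (Sum.inl a) ↔ a = p.1 := by
  rw [SimpleGraph.adj_comm, corona_adj_lr]

lemma corona_adj_rr {G : SimpleGraph α} {H : SimpleGraph β} {p q : α × β} :
    (corona G H).Adj (Sum.inr p) (Sum.inr q) ↔ p.1 = q.1 ∧ H.Adj p.2 q.2 := by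
  simp only [corona, SimpleGraph.fromRel_adj]
  constructor
  · rintro ⟨-, ⟨h1, h2⟩ | ⟨h1, h2⟩⟩
    · exact ⟨h1, h2⟩
    · exact ⟨h1.symm, h2.symm⟩
  · rintro ⟨h1, h2⟩
    refine ⟨?_, Or.inl ⟨h1, h2⟩⟩
    intro e
    rw [Sum.inr.injEq] at e
    exact h2.ne (congrArg Prod.snd e)

lemma join_adj_ns {H : SimpleGraph β} {b : β} :
    (joinK1 H).Adj none (some b) := by
  simp only [joinK1, SimpleGraph.fromRel_adj]
  exact ⟨by simp, Or.inl trivial⟩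

lemma join_adj_ss {H : SimpleGraph β} {b b' : β} :
    (joinK1 H).Adj (some b) (some b') ↔ H.Adj b b' := by
  simp only [joinK1, SimpleGraph.fromRel_adj]
  constructor
  · rintro ⟨-, h | h⟩
    · exact h
    · exact h.symm
  · intro h; exact ⟨by simpa using h.ne, Or.inl h⟩

lemma join_adj_nn {H : SimpleGraph β} : ¬ (joinK1 H).Adj none none := by
  simp

/-- distance formula in the join. -/
lemma join_dist_eq {H : SimpleGraph β} (x y : Option β) :
    (joinK1 H).dist x y = if x = y then 0 else if (joinK1 H).Adj x y then 1 else 2 := by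
  split_ifs with h1 h2
  · subst h1; exact SimpleGraph.dist_self
  · exact SimpleGraph.dist_eq_one_iff_adj.mpr h2
  · -- x ≠ y, not adjacent: both are `some`, walk of length 2 via none
    obtain ⟨b, rfl⟩ : ∃ b, x = some b := by
      cases x with
      | none => cases y with
        | none => exact absurd rfl h1
        | some b => exact absurd join_adj_ns h2
      | some b => exact ⟨b, rfl⟩
    obtain ⟨b', rfl⟩ : ∃ b', y = some b' := by
      cases y with
      | none => exact absurd join_adj_ns.symm h2
      | some b' => exact ⟨b', rfl⟩
    let w : (joinK1 H).Walk (some b) (some b') :=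
      SimpleGraph.Walk.cons join_adj_ns.symm (SimpleGraph.Walk.cons join_adj_ns SimpleGraph.Walk.nil)
    have hle : (joinK1 H).dist (some b) (some b') ≤ 2 := by simpa [w] using SimpleGraph.dist_le w
    have hne0 : (joinK1 H).dist (some b) (some b') ≠ 0 := by
      rw [SimpleGraph.dist_ne_zero_iff_ne_and_reachable]
      exact ⟨h1, ⟨w⟩⟩
    have hne1 : (joinK1 H).dist (some b) (some b') ≠ 1 := by
      rw [ne_eq, SimpleGraph.dist_eq_one_iff_adj]
      exact h2
    omega

end Aux
section Dist
open scoped Classical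
variable {α β : Type*}

open Classical in
/-- distance formula for the corona product -/
noncomputable def cd (G : SimpleGraph α) (H : SimpleGraph β) : α ⊕ α × β → α ⊕ α × β → ℕ
  | Sum.inl a, Sum.inl a' => G.dist a a'
  | Sum.inl a, Sum.inr p => G.dist a p.1 + 1
  | Sum.inr p, Sum.inl a => G.dist p.1 a + 1
  | Sum.inr p, Sum.inr q =>
      if p.1 = q.1 then (if p.2 = q.2 then 0 else if H.Adj p.2 q.2 then 1 else 2)
      else G.dist p.1 q.1 + 2

lemma cd_le_adj {G : SimpleGraph α} {H : SimpleGraph β} (hG : G.Connected)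
    {x z : α ⊕ α × β} (h : (corona G H).Adj x z) (y : α ⊕ α × β) :
    cd G H x y ≤ cd G H z y + 1 := by
  cases x with
  | inl a =>
    cases z with
    | inl a' =>
      rw [corona_adj_ll] at h
      have h1 : G.dist a a' = 1 := SimpleGraph.dist_eq_one_iff_adj.mpr h
      cases y with
      | inl a'' =>
        have := hG.dist_triangle (u := a) (v := a') (w := a'')
        simp only [cd]; omega
      | inr r =>
        have := hG.dist_triangle (u := a) (v := a') (w := r.1)
        simp only [cd]; omega
    | inr p =>
      rw [corona_adj_lr] at h
      cases y with
      | inl a'' => subst h; simp only [cd]; omega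
      | inr r =>
        subst h
        simp only [cd]
        by_cases h1 : p.1 = r.1
        · have hz : G.dist p.1 r.1 = 0 := by rw [h1]; exact SimpleGraph.dist_self
          simp only [if_pos h1]
          split_ifs <;> omega
        · simp only [if_neg h1]; omega
  | inr p =>
    cases z with
    | inl a' =>
      rw [corona_adj_rl] at h
      cases y with
      | inl a'' => subst h; simp only [cd]; omega
      | inr r =>
        subst h
        simp only [cd]
        by_cases h1 : p.1 = r.1
        · have hz : G.dist p.1 r.1 = 0 := by rw [h1]; exact SimpleGraph.dist_self
          simp only [if_pos h1]
          split_ifs <;> omega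
        · simp only [if_neg h1]; omega
    | inr q =>
      rw [corona_adj_rr] at h
      obtain ⟨he, ha⟩ := h
      cases y with
      | inl a'' => rw [cd, cd, he]; omega
      | inr r =>
        simp only [cd, he]
        by_cases h1 : q.1 = r.1
        · simp only [if_pos h1]
          split_ifs <;> try omega
          all_goals simp_all
        · simp only [if_neg h1]; omega

lemma cd_le_length {G : SimpleGraph α} {H : SimpleGraph β} (hG : G.Connected)
    {x y : α ⊕ α × β} (p : (corona G H).Walk x y) : cd G H x y ≤ p.length := by
  induction p with
  | nil =>
    rename_i u
    cases u with
    | inl a => simp [cd, SimpleGraph.dist_self]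
    | inr q => simp [cd]
  | cons h q ih =>
    calc cd G H _ _ ≤ cd G H _ _ + 1 := cd_le_adj hG h _
    _ ≤ q.length + 1 := by omega
    _ = _ := by simp

def inlHom (G : SimpleGraph α) (H : SimpleGraph β) : G →g corona G H :=
  ⟨Sum.inl, fun h => corona_adj_ll.mpr h⟩

lemma exists_walk_cd {G : SimpleGraph α} {H : SimpleGraph β} (hG : G.Connected)
    (x y : α ⊕ α × β) : ∃ p : (corona G H).Walk x y, p.length = cd G H x y := by
  cases x with
  | inl a =>
    cases y with
    | inl a' =>
      obtain ⟨p, hp⟩ := hG.exists_walk_length_eq_dist a a'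
      exact ⟨p.map (inlHom G H), (SimpleGraph.Walk.length_map _ _).trans hp⟩
    | inr r =>
      obtain ⟨p, hp⟩ := hG.exists_walk_length_eq_dist a r.1
      refine ⟨(p.map (inlHom G H)).concat (corona_adj_lr.mpr rfl), ?_⟩
      exact (SimpleGraph.Walk.length_concat _ _).trans (congrArg (· + 1) ((SimpleGraph.Walk.length_map _ _).trans hp))
  | inr p =>
    cases y with
    | inl a' =>
      obtain ⟨q, hq⟩ := hG.exists_walk_length_eq_dist p.1 a'
      refine ⟨SimpleGraph.Walk.cons (corona_adj_rl.mpr rfl) (q.map (inlHom G H)), ?_⟩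
      exact congrArg (· + 1) ((SimpleGraph.Walk.length_map _ _).trans hq)
    | inr r =>
      by_cases h1 : p.1 = r.1
      · by_cases h2 : p.2 = r.2
        · have : p = r := Prod.ext h1 h2
          subst this
          exact ⟨SimpleGraph.Walk.nil, by simp [cd]⟩
        · by_cases h3 : H.Adj p.2 r.2
          · exact ⟨SimpleGraph.Walk.cons (corona_adj_rr.mpr ⟨h1, h3⟩) SimpleGraph.Walk.nil,
              by simp [cd, h1, h2, h3]⟩
          · refine ⟨SimpleGraph.Walk.cons (corona_adj_rl.mpr rfl)
              (SimpleGraph.Walk.cons (corona_adj_lr.mpr h1) SimpleGraph.Walk.nil), ?_⟩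
            simp [cd, h1, h2, h3]
      · obtain ⟨q, hq⟩ := hG.exists_walk_length_eq_dist p.1 r.1
        refine ⟨SimpleGraph.Walk.cons (corona_adj_rl.mpr rfl)
          ((q.map (inlHom G H)).concat (corona_adj_lr.mpr rfl)), ?_⟩
        rw [show cd G H (Sum.inr p) (Sum.inr r) = G.dist p.1 r.1 + 2 by simp [cd, h1]]
        exact congrArg (· + 1) ((SimpleGraph.Walk.length_concat _ _).trans (congrArg (· + 1) ((SimpleGraph.Walk.length_map _ _).trans hq)))

lemma corona_dist_eq {G : SimpleGraph α} {H : SimpleGraph β} (hG : G.Connected)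
    (x y : α ⊕ α × β) : (corona G H).dist x y = cd G H x y := by
  obtain ⟨p, hp⟩ := exists_walk_cd hG x y
  refine le_antisymm (hp ▸ SimpleGraph.dist_le p) ?_
  obtain ⟨q, hq⟩ := SimpleGraph.Reachable.exists_walk_length_eq_dist ⟨p⟩
  exact hq ▸ cd_le_length hG q


end Dist
section Main
open scoped Classical
variable {α β : Type*}

lemma join_dist_none_some {H : SimpleGraph β} (b : β) :
    (joinK1 H).dist none (some b) = 1 :=
  SimpleGraph.dist_eq_one_iff_adj.mpr join_adj_ns

lemma cd_inr_same (G : SimpleGraph α) (H : SimpleGraph β) (a : α) (c b : β) :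
    cd G H (Sum.inr (a, c)) (Sum.inr (a, b)) = (joinK1 H).dist (some c) (some b) := by
  rw [join_dist_eq]
  simp only [cd, if_true, Option.some.injEq, join_adj_ss, if_pos rfl]

theorem stmt5' {α β : Type*} [Fintype α] [Fintype β] (G : SimpleGraph α) (H : SimpleGraph β)
    (hG : G.Connected) (hn : 2 ≤ Fintype.card α) (hH : ∃ x y, H.Adj x y)
    (hv : ∃ S : Finset (Option β), IsLocalMetricBasis (joinK1 H) S ∧ none ∈ S) :
    localMetricDim (corona G H) = Fintype.card α * (localMetricDim (joinK1 H) - 1) := by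
  classical
  obtain ⟨S, ⟨hSgen, hScard⟩, hnone⟩ := hv
  set k := localMetricDim (joinK1 H) with hk
  -- a helper to extract a non-`none` distinguisher for adjacent pairs in H
  have hdist_some : ∀ b b' : β, H.Adj b b' →
      ∃ c : β, some c ∈ S ∧
        (joinK1 H).dist (some c) (some b) ≠ (joinK1 H).dist (some c) (some b') := by
    intro b b' hbb'
    obtain ⟨v, hvS, hvd⟩ := hSgen _ _ (join_adj_ss.mpr hbb')
    cases v with
    | none =>
      exfalso
      rw [join_dist_none_some, join_dist_none_some] at hvd
      exact hvd rfl
    | some c => exact ⟨c, hvS, hvd⟩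
  obtain ⟨b₀, b₁, hb01⟩ := hH
  obtain ⟨c₀, hc₀S, -⟩ := hdist_some b₀ b₁ hb01
  -- k ≥ 2
  have hk2 : 2 ≤ k := by
    rw [← hScard]
    have : ({none, some c₀} : Finset (Option β)) ⊆ S := by
      intro x hx
      simp only [Finset.mem_insert, Finset.mem_singleton] at hx
      rcases hx with rfl | rfl
      · exact hnone
      · exact hc₀S
    calc 2 = ({none, some c₀} : Finset (Option β)).card := by simp
    _ ≤ S.card := Finset.card_le_card this
  -- the Finset B ⊆ β corresponding to S \ {none}
  set B : Finset β := (S.erase none).preimage some ((Option.some_injective β).injOn) with hB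
  have hBmem : ∀ b : β, b ∈ B ↔ some b ∈ S := by
    intro b
    simp [hB, Finset.mem_preimage, Finset.mem_erase]
  have hBimg : B.image some = S.erase none := by
    ext o
    cases o with
    | none => simp
    | some b => simp [hBmem, Finset.mem_erase]
  have hBcard : B.card = k - 1 := by
    have h1 : (B.image some).card = B.card :=
      Finset.card_image_of_injective _ (Option.some_injective β)
    rw [hBimg, Finset.card_erase_of_mem hnone, hScard] at h1
    omega
  have hc₀B : c₀ ∈ B := (hBmem c₀).mpr hc₀S
  -- the candidate generator T for the corona
  set T : Finset (α ⊕ α × β) :=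
    (Finset.univ ×ˢ B).map ⟨Sum.inr, Sum.inr_injective⟩ with hT
  have hTmem : ∀ (a : α) (b : β), b ∈ B → Sum.inr (a, b) ∈ T := by
    intro a b hb
    simp [hT, Finset.mem_map, Finset.mem_product, hb]
  have hTcard : T.card = Fintype.card α * (k - 1) := by
    rw [hT, Finset.card_map, Finset.card_product, Finset.card_univ, hBcard]
  -- T is a local metric generator of the corona
  have hTgen : IsLocalMetricGenerator (corona G H) ↑T := by
    intro x y hxy
    cases x with
    | inl a =>
      cases y with
      | inl a' =>
        have h := corona_adj_ll.mp hxy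
        refine ⟨Sum.inr (a', c₀), hTmem a' c₀ hc₀B, ?_⟩
        rw [corona_dist_eq hG, corona_dist_eq hG]
        simp only [cd]
        have h1 : G.dist a' a = 1 := SimpleGraph.dist_eq_one_iff_adj.mpr h.symm
        have h2 : G.dist a' a' = 0 := SimpleGraph.dist_self
        omega
      | inr r =>
        have h := corona_adj_lr.mp hxy
        obtain ⟨a', ha'⟩ := Fintype.exists_ne_of_one_lt_card (by omega) a
        refine ⟨Sum.inr (a', c₀), hTmem a' c₀ hc₀B, ?_⟩
        rw [corona_dist_eq hG, corona_dist_eq hG]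
        have hne : ¬ a' = r.1 := by rw [← h]; exact ha'
        simp only [cd, if_neg hne]
        rw [← h]
        omega
    | inr r =>
      cases y with
      | inl a =>
        have h := corona_adj_rl.mp hxy
        obtain ⟨a', ha'⟩ := Fintype.exists_ne_of_one_lt_card (by omega) a
        refine ⟨Sum.inr (a', c₀), hTmem a' c₀ hc₀B, ?_⟩
        rw [corona_dist_eq hG, corona_dist_eq hG]
        have hne : ¬ a' = r.1 := by rw [← h]; exact ha'
        simp only [cd, if_neg hne]
        rw [← h]
        omega
      | inr r' =>
        obtain ⟨he, ha⟩ := corona_adj_rr.mp hxy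
        obtain ⟨c, hcS, hcd⟩ := hdist_some r.2 r'.2 ha
        refine ⟨Sum.inr (r.1, c), hTmem r.1 c ((hBmem c).mpr hcS), ?_⟩
        rw [corona_dist_eq hG, corona_dist_eq hG]
        have e1 : (Sum.inr (r.1, r.2) : α ⊕ α × β) = Sum.inr r := by simp
        have e2 : (Sum.inr (r.1, r'.2) : α ⊕ α × β) = Sum.inr r' := by
          rw [he]
        rw [← e1, ← e2, cd_inr_same, cd_inr_same]
        exact hcd
  -- the set defining localMetricDim of the corona
  have hTmemset : Fintype.card α * (k - 1) ∈
      {m | ∃ W : Finset (α ⊕ α × β), W.card = m ∧ IsLocalMetricGenerator (corona G H) ↑W} :=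
    ⟨T, hTcard, hTgen⟩
  -- lower bound: every generator has at least n(k-1) elements
  have hlow : ∀ m ∈ {m | ∃ W : Finset (α ⊕ α × β), W.card = m ∧
      IsLocalMetricGenerator (corona G H) ↑W}, Fintype.card α * (k - 1) ≤ m := by
    rintro m ⟨W, hWcard, hWgen⟩
    set Wa : α → Finset β := fun a =>
      W.preimage (fun b => Sum.inr (a, b)) (fun u _ v _ h => by
        simpa using congrArg (fun x => Sum.elim (fun _ => u) Prod.snd x) h) with hWa
    have hWamem : ∀ a b, b ∈ Wa a ↔ Sum.inr (a, b) ∈ W := by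
      intro a b; exact Finset.mem_preimage
    -- per-copy lower bound
    have hkey : ∀ a : α, k - 1 ≤ (Wa a).card := by
      intro a
      set Sa : Finset (Option β) := insert none ((Wa a).image some) with hSa
      have hSagen : IsLocalMetricGenerator (joinK1 H) ↑Sa := by
        intro x y hxy
        cases x with
        | none =>
          cases y with
          | none => exact absurd hxy (joinK1 H).irrefl
          | some b =>
            refine ⟨none, by simp [hSa], ?_⟩
            rw [SimpleGraph.dist_self, join_dist_none_some]
            omega
        | some b =>
          cases y with
          | none =>
            refine ⟨none, by simp [hSa], ?_⟩
            rw [SimpleGraph.dist_self, join_dist_none_some]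
            omega
          | some b' =>
            have hbb' := join_adj_ss.mp hxy
            obtain ⟨w, hwW, hwd⟩ := hWgen (Sum.inr (a, b)) (Sum.inr (a, b'))
              (corona_adj_rr.mpr ⟨rfl, hbb'⟩)
            rw [corona_dist_eq hG, corona_dist_eq hG] at hwd
            cases w with
            | inl a'' =>
              exfalso
              simp only [cd] at hwd
              omega
            | inr q =>
              by_cases hq : q.1 = a
              · have hqe : (Sum.inr q : α ⊕ α × β) = Sum.inr (a, q.2) := by
                  rw [← hq]
                rw [hqe, cd_inr_same, cd_inr_same] at hwd
                refine ⟨some q.2, ?_, hwd⟩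
                simp only [hSa, Finset.coe_insert, Set.mem_insert_iff, Finset.coe_image,
                  Set.mem_image, Finset.mem_coe]
                right
                have hw' : Sum.inr (a, q.2) ∈ W := hqe ▸ Finset.mem_coe.mp hwW
                exact ⟨q.2, (hWamem a q.2).mpr hw', rfl⟩
              · exfalso
                simp only [cd, if_neg hq] at hwd
                omega
      have h1 : k ≤ Sa.card :=
        Nat.sInf_le ⟨Sa, rfl, hSagen⟩
      have h2 : Sa.card ≤ ((Wa a).image some).card + 1 := Finset.card_insert_le _ _
      have h3 : ((Wa a).image some).card = (Wa a).card :=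
        Finset.card_image_of_injective _ (Option.some_injective β)
      omega
    -- sum over the copies
    set U : Finset (α ⊕ α × β) :=
      Finset.univ.biUnion (fun a => (Wa a).image (fun b => Sum.inr (a, b))) with hU
    have hUsub : U ⊆ W := by
      intro x hx
      simp only [hU, Finset.mem_biUnion, Finset.mem_image] at hx
      obtain ⟨a, -, b, hb, rfl⟩ := hx
      exact (hWamem a b).mp hb
    have hUcard : U.card = ∑ a : α, (Wa a).card := by
      rw [hU, Finset.card_biUnion]
      · refine Finset.sum_congr rfl fun a _ => ?_
        have hinj : Function.Injective (fun b => (Sum.inr (a, b) : α ⊕ α × β)) := by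
          intro u v h
          simpa using h
        exact Finset.card_image_of_injective _ hinj
      · intro a _ a' _ haa'
        simp only [Finset.disjoint_left, Finset.mem_image]
        rintro x ⟨b, -, rfl⟩ ⟨b', -, hbb'⟩
        have he : a' = a := by
          have := congrArg (fun z => Sum.elim id Prod.fst z) hbb'
          simpa using this
        exact haa' he.symm
    have hsum : Fintype.card α * (k - 1) ≤ ∑ a : α, (Wa a).card := by
      calc Fintype.card α * (k - 1) = ∑ _a : α, (k - 1) := by
            rw [Finset.sum_const, Finset.card_univ, smul_eq_mul]
      _ ≤ ∑ a : α, (Wa a).card := Finset.sum_le_sum fun a _ => hkey a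
    calc Fintype.card α * (k - 1) ≤ U.card := hsum.trans_eq hUcard.symm
    _ ≤ W.card := Finset.card_le_card hUsub
    _ = m := hWcard
  exact le_antisymm (Nat.sInf_le hTmemset) (le_csInf ⟨_, hTmemset⟩ hlow)

end Main
/-- If `H` is non-empty and the vertex of `K₁` is in some local metric basis of
`K₁ + H`, then `dim_l (G ⊙ H) = n ⬝ (dim_l (K₁ + H) - 1)` for connected `G` of order `n ≥ 2`. -/
theorem stmt5 {α β : Type*} [Fintype α] [Fintype β] (G : SimpleGraph α) (H : SimpleGraph β)
    (hG : G.Connected) (hn : 2 ≤ Fintype.card α) (hH : ∃ x y, H.Adj x y)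
    (hv : ∃ S : Finset (Option β), IsLocalMetricBasis (joinK1 H) S ∧ none ∈ S) :
    localMetricDim (corona G H) = Fintype.card α * (localMetricDim (joinK1 H) - 1) := stmt5' G H hG hn hH hv
end

section
/- For any connected graph G of order n ≥ 2 and any integer t ≥ 2, dim_l(G ⊙ K_t) = n(t − 1). -/
open SimpleGraph

namespace Stmt6Aux

open scoped Classical in
noncomputable section
variable {α : Type*} {t : ℕ} {G : SimpleGraph α}

lemma cadj_ll {a b : α} :
    (corona G (⊤ : SimpleGraph (Fin t))).Adj (Sum.inl a) (Sum.inl b) ↔ G.Adj a b := by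
  simp only [corona, fromRel_adj, ne_eq, Sum.inl.injEq]
  constructor
  · rintro ⟨h, h1 | h1⟩ <;> [exact h1; exact h1.symm]
  · intro h; exact ⟨h.ne, Or.inl h⟩

lemma cadj_lr {a : α} {p : α × Fin t} :
    (corona G (⊤ : SimpleGraph (Fin t))).Adj (Sum.inl a) (Sum.inr p) ↔ a = p.1 := by
  simp only [corona, fromRel_adj, ne_eq]
  constructor
  · rintro ⟨h, h1 | h1⟩ <;> exact h1
  · intro h; exact ⟨by simp, Or.inl h⟩

lemma cadj_rr {p q : α × Fin t} :
    (corona G (⊤ : SimpleGraph (Fin t))).Adj (Sum.inr p) (Sum.inr q) ↔ p.1 = q.1 ∧ p.2 ≠ q.2 := by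
  simp only [corona, fromRel_adj, ne_eq, top_adj, Sum.inr.injEq]
  constructor
  · rintro ⟨h, ⟨h1, h2⟩ | ⟨h1, h2⟩⟩
    · exact ⟨h1, h2⟩
    · exact ⟨h1.symm, fun hh => h2 hh.symm⟩
  · rintro ⟨h1, h2⟩
    exact ⟨fun hh => h2 (by rw [hh]), Or.inl ⟨h1, h2⟩⟩

/-- The embedding of `G` in the corona as a graph hom. -/
def homInl : G →g corona G (⊤ : SimpleGraph (Fin t)) where
  toFun := Sum.inl
  map_rel' := fun h => cadj_ll.mpr h

lemma cor_connected (hG : G.Connected) :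
    (corona G (⊤ : SimpleGraph (Fin t))).Connected := by
  have hne : Nonempty α := hG.nonempty
  constructor
  have key : ∀ x : α ⊕ α × Fin t, ∃ a : α,
      (corona G (⊤ : SimpleGraph (Fin t))).Reachable x (Sum.inl a) := by
    rintro (a | ⟨a, i⟩)
    · exact ⟨a, Reachable.refl _⟩
    · exact ⟨a, ((cadj_lr.mpr rfl).symm : (corona G _).Adj _ _).reachable⟩
  intro x y
  obtain ⟨a, ha⟩ := key x
  obtain ⟨b, hb⟩ := key y
  exact ha.trans (((hG a b).map (homInl)).trans hb.symm)

lemma pot_walk {V : Type*} {H : SimpleGraph V} {Φ : V → ℕ}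
    (hΦ : ∀ u v, H.Adj u v → Φ u ≤ Φ v + 1) {x y : V} (w : H.Walk x y) :
    Φ x ≤ Φ y + w.length := by
  induction w with
  | nil => simp
  | cons h w ih =>
    have := hΦ _ _ h
    simp only [Walk.length_cons]
    omega

open Classical in
noncomputable def Φ (G : SimpleGraph α) (t : ℕ) (a : α) : α ⊕ α × Fin t → ℕ :=
  fun x => match x with
  | Sum.inl c => G.dist c a + 1
  | Sum.inr p => if p.1 = a then (if p.2.val = 0 then 0 else 1) else G.dist p.1 a + 2

lemma Φ_lipschitz (hG : G.Connected) (a : α) : ∀ u v,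
    (corona G (⊤ : SimpleGraph (Fin t))).Adj u v → Φ G t a u ≤ Φ G t a v + 1 := by
  have tri : ∀ c c' : α, G.Adj c c' → G.dist c a ≤ G.dist c' a + 1 := by
    intro c c' h
    have h1 := hG.dist_triangle (u := c) (v := c') (w := a)
    rw [dist_eq_one_iff_adj.mpr h] at h1
    omega
  rintro (c | ⟨c, k⟩) (c' | ⟨c', k'⟩) h
  · have := tri c c' (cadj_ll.mp h)
    simp only [Φ]; omega
  · have hc : c = c' := cadj_lr.mp h
    subst hc
    simp only [Φ]
    split_ifs <;> simp_all [dist_self] <;> omega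
  · have hc : c' = c := cadj_lr.mp h.symm
    subst hc
    simp only [Φ]
    split_ifs <;> simp_all [dist_self] <;> omega
  · obtain ⟨h1, h2⟩ := cadj_rr.mp h
    simp only at h1 h2
    subst h1
    simp only [Φ]
    split_ifs <;> omega

lemma dist_inr_inl_le (hG : G.Connected) (c a : α) (i : Fin t) :
    (corona G (⊤ : SimpleGraph (Fin t))).dist (Sum.inr (c, i)) (Sum.inl a) ≤ G.dist c a + 1 := by
  obtain ⟨w, hw⟩ := hG.exists_walk_length_eq_dist c a
  have hadj : (corona G (⊤ : SimpleGraph (Fin t))).Adj (Sum.inr (c, i)) (Sum.inl c) :=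
    (cadj_lr.mpr rfl).symm
  have := dist_le (Walk.cons hadj (w.map (homInl)))
  have h2 : (Walk.cons hadj (w.map (homInl))).length = G.dist c a + 1 := by
    show (w.map (homInl)).length + 1 = _
    rw [Walk.length_map, hw]
  rw [h2] at this
  exact this

lemma dist_inr_a0_ge (hG : G.Connected) {c a : α} (hca : c ≠ a) (i : Fin t)
    {i0 : Fin t} (hi0 : i0.val = 0) :
    G.dist c a + 2 ≤
      (corona G (⊤ : SimpleGraph (Fin t))).dist (Sum.inr (c, i)) (Sum.inr (a, i0)) := by
  obtain ⟨w, hw⟩ := ((cor_connected hG) (Sum.inr (c, i)) (Sum.inr (a, i0))).exists_walk_length_eq_dist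
  have h1 := pot_walk (Φ_lipschitz hG a) w
  rw [hw] at h1
  simp only [Φ] at h1
  rw [if_neg hca, if_pos trivial, if_pos hi0] at h1
  omega

lemma dist_hom_le {V W : Type*} {H : SimpleGraph V} {H' : SimpleGraph W} (f : H →g H')
    {u v : V} (h : H.Reachable u v) : H'.dist (f u) (f v) ≤ H.dist u v := by
  obtain ⟨w, hw⟩ := h.exists_walk_length_eq_dist
  calc H'.dist (f u) (f v) ≤ (w.map f).length := dist_le _
    _ = H.dist u v := by rw [Walk.length_map, hw]

lemma swap_fst (a : α) (i j : Fin t) (p : α × Fin t) :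
    (Equiv.swap (a, i) (a, j) p).1 = p.1 := by
  rw [Equiv.swap_apply_def]
  split_ifs <;> simp_all

/-- The twin-swapping automorphism of the corona. -/
noncomputable def σ (a : α) (i j : Fin t) : (α ⊕ α × Fin t) ≃ (α ⊕ α × Fin t) :=
  Equiv.sumCongr (Equiv.refl α) (Equiv.swap (a, i) (a, j))

lemma σ_adj (a : α) (i j : Fin t) {x y : α ⊕ α × Fin t}
    (h : (corona G (⊤ : SimpleGraph (Fin t))).Adj x y) :
    (corona G (⊤ : SimpleGraph (Fin t))).Adj (σ a i j x) (σ a i j y) := by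
  rcases x with c | p <;> rcases y with c' | q
  · exact h
  · simp only [σ, Equiv.sumCongr_apply, Sum.map_inl, Sum.map_inr, Equiv.refl_apply]
    rw [cadj_lr, swap_fst]
    exact cadj_lr.mp h
  · simp only [σ, Equiv.sumCongr_apply, Sum.map_inl, Sum.map_inr, Equiv.refl_apply]
    exact (by rw [cadj_lr, swap_fst]; exact cadj_lr.mp h.symm :
      (corona G (⊤ : SimpleGraph (Fin t))).Adj (Sum.inl c') (Sum.inr (Equiv.swap (a,i) (a,j) p))).symm
  · obtain ⟨h1, h2⟩ := cadj_rr.mp h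
    simp only [σ, Equiv.sumCongr_apply, Sum.map_inr]
    rw [cadj_rr, swap_fst, swap_fst]
    refine ⟨h1, fun hh => h2 ?_⟩
    have hpq : Equiv.swap (a,i) (a,j) p = Equiv.swap (a,i) (a,j) q :=
      Prod.ext (by rw [swap_fst, swap_fst]; exact h1) hh
    have := (Equiv.swap (a,i) (a,j)).injective hpq
    rw [this]

lemma σ_invol (a : α) (i j : Fin t) (x : α ⊕ α × Fin t) : σ a i j (σ a i j x) = x := by
  rcases x with c | p <;> simp [σ]

lemma dist_σ (hG : G.Connected) (a : α) (i j : Fin t) (x y : α ⊕ α × Fin t) :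
    (corona G (⊤ : SimpleGraph (Fin t))).dist (σ a i j x) (σ a i j y) =
    (corona G (⊤ : SimpleGraph (Fin t))).dist x y := by
  set C := corona G (⊤ : SimpleGraph (Fin t))
  have hC := cor_connected (t := t) hG
  refine le_antisymm (dist_hom_le ⟨σ a i j, fun h => σ_adj a i j h⟩ (hC x y)) ?_
  have h2 : C.dist (σ a i j (σ a i j x)) (σ a i j (σ a i j y)) ≤
      C.dist (σ a i j x) (σ a i j y) :=
    dist_hom_le ⟨σ a i j, fun h => σ_adj a i j h⟩ (hC _ _)
  rwa [σ_invol, σ_invol] at h2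

lemma twin_dist (hG : G.Connected) (a : α) {i j : Fin t} (hij : i ≠ j)
    {v : α ⊕ α × Fin t} (hvi : v ≠ Sum.inr (a, i)) (hvj : v ≠ Sum.inr (a, j)) :
    (corona G (⊤ : SimpleGraph (Fin t))).dist v (Sum.inr (a, i)) =
    (corona G (⊤ : SimpleGraph (Fin t))).dist v (Sum.inr (a, j)) := by
  have hσv : σ a i j v = v := by
    rcases v with c | p
    · rfl
    · simp only [σ, Equiv.sumCongr_apply, Sum.map_inr]
      rw [Equiv.swap_apply_of_ne_of_ne (by simpa using hvi) (by simpa using hvj)]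
  have h := dist_σ hG a i j v (Sum.inr (a, i))
  rw [hσv] at h
  simp only [σ, Equiv.sumCongr_apply, Sum.map_inr, Equiv.swap_apply_left] at h
  exact h.symm


end
end Stmt6Aux

open Stmt6Aux in
/-- For connected `G` of order `n ≥ 2` and `t ≥ 2`,
`dim_l (G ⊙ K_t) = n (t - 1)`. -/
theorem stmt6 {α : Type*} [Fintype α] (G : SimpleGraph α) (hG : G.Connected)
    (hn : 2 ≤ Fintype.card α) (t : ℕ) (ht : 2 ≤ t) :
    localMetricDim (corona G (⊤ : SimpleGraph (Fin t))) = Fintype.card α * (t - 1) := by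
  classical
  unfold localMetricDim IsLocalMetricGenerator
  set C := corona G (⊤ : SimpleGraph (Fin t)) with hC
  set i0 : Fin t := ⟨0, by omega⟩ with hi0
  set i1 : Fin t := ⟨1, by omega⟩ with hi1
  have hi10 : i1 ≠ i0 := by simp [hi0, hi1, Fin.ext_iff]
  -- the generator
  set S : Finset (α ⊕ α × Fin t) :=
    (Finset.univ ×ˢ (Finset.univ \ {i0})).image Sum.inr with hSdef
  have hmemS : ∀ (a : α) (i : Fin t), Sum.inr (a, i) ∈ S ↔ i ≠ i0 := by
    intro a i; simp [hSdef]
  have hcardS : S.card = Fintype.card α * (t - 1) := by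
    rw [hSdef, Finset.card_image_of_injective _ Sum.inr_injective, Finset.card_product]
    simp [Finset.card_sdiff, Finset.card_univ]
  -- distinguishing an inl vertex from a leaf in its copy
  have lr : ∀ (a : α) (j : Fin t), ∃ v ∈ S,
      C.dist v (Sum.inl a) ≠ C.dist v (Sum.inr (a, j)) := by
    intro a j
    by_cases hj : j = i0
    · subst hj
      obtain ⟨c, hc⟩ := Fintype.exists_ne_of_one_lt_card (by omega) a
      refine ⟨Sum.inr (c, i1), (hmemS c i1).mpr hi10, ?_⟩
      have h1 := dist_inr_inl_le (t := t) hG c a i1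
      have h2 := dist_inr_a0_ge (t := t) hG hc i1 (i0 := i0) rfl
      rw [← hC] at h1 h2
      omega
    · refine ⟨Sum.inr (a, j), (hmemS a j).mpr hj, ?_⟩
      have h1 : C.dist (Sum.inr (a, j)) (Sum.inl a) = 1 :=
        dist_eq_one_iff_adj.mpr (cadj_lr.mpr rfl).symm
      rw [h1, SimpleGraph.dist_self]
      omega
  have hgenS : ∀ x y : α ⊕ α × Fin t, C.Adj x y →
      ∃ v ∈ S, C.dist v x ≠ C.dist v y := by
    rintro (a | ⟨a, i⟩) (b | ⟨b, j⟩) hxy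
    · have hab : G.Adj a b := cadj_ll.mp hxy
      refine ⟨Sum.inr (a, i1), (hmemS a i1).mpr hi10, ?_⟩
      have h1 : C.dist (Sum.inr (a, i1)) (Sum.inl a) = 1 :=
        dist_eq_one_iff_adj.mpr (cadj_lr.mpr rfl).symm
      rw [h1]
      intro h
      exact hab.ne' (cadj_lr.mp (dist_eq_one_iff_adj.mp h.symm).symm)
    · have hab : a = b := cadj_lr.mp hxy
      subst hab
      exact lr a j
    · have hab : b = a := cadj_lr.mp hxy.symm
      subst hab
      obtain ⟨v, hv, hd⟩ := lr b i
      exact ⟨v, hv, hd.symm⟩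
    · obtain ⟨h1, h2⟩ := cadj_rr.mp hxy
      simp only at h1 h2
      subst h1
      by_cases hii : i = i0
      · have hj : j ≠ i0 := fun hh => h2 (hii.trans hh.symm)
        refine ⟨Sum.inr (a, j), (hmemS a j).mpr hj, ?_⟩
        have hd1 : C.dist (Sum.inr (a, j)) (Sum.inr (a, i)) = 1 :=
          dist_eq_one_iff_adj.mpr (cadj_rr.mpr ⟨rfl, Ne.symm h2⟩)
        rw [hd1, SimpleGraph.dist_self]; omega
      · refine ⟨Sum.inr (a, i), (hmemS a i).mpr hii, ?_⟩
        have hd1 : C.dist (Sum.inr (a, i)) (Sum.inr (a, j)) = 1 :=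
          dist_eq_one_iff_adj.mpr (cadj_rr.mpr ⟨rfl, h2⟩)
        rw [hd1, SimpleGraph.dist_self]; omega
  -- lower bound
  have hlb : ∀ k ∈ {k | ∃ T : Finset (α ⊕ α × Fin t), T.card = k ∧
      (∀ x y, C.Adj x y → ∃ v ∈ T, C.dist v x ≠ C.dist v y)},
      Fintype.card α * (t - 1) ≤ k := by
    rintro k ⟨T, hTcard, hTgen⟩
    -- leaves missing from T: at most one per copy
    have key : ∀ p q : α × Fin t, p.1 = q.1 → Sum.inr p ∉ T → Sum.inr q ∉ T → p = q := by
      rintro ⟨a, i⟩ ⟨b, j⟩ h1 hp hq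
      simp only at h1
      subst h1
      by_contra hne
      have hij : i ≠ j := fun hh => hne (by rw [hh])
      obtain ⟨v, hvT, hvd⟩ := hTgen _ _ ((cadj_rr (p := (a, i)) (q := (a, j))).mpr ⟨rfl, hij⟩)
      have hvi : v ≠ Sum.inr (a, i) := fun hh => hp (hh ▸ hvT)
      have hvj : v ≠ Sum.inr (a, j) := fun hh => hq (hh ▸ hvT)
      exact hvd (twin_dist hG a hij hvi hvj)
    set M : Finset (α × Fin t) := Finset.univ.filter (fun p => Sum.inr p ∉ T) with hM
    set N : Finset (α × Fin t) := Finset.univ.filter (fun p => Sum.inr p ∈ T) with hN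
    have hMcard : M.card ≤ Fintype.card α := by
      have hinj : Set.InjOn (fun p : α × Fin t => p.1) ↑M := by
        intro p hp q hq hpq
        simp only [hM, Finset.coe_filter, Set.mem_setOf_eq] at hp hq
        exact key p q hpq hp.2 hq.2
      calc M.card = (M.image (fun p : α × Fin t => p.1)).card :=
            (Finset.card_image_of_injOn hinj).symm
        _ ≤ Fintype.card α := Finset.card_le_univ _
    have hNM : N.card + M.card = Fintype.card α * t := by
      have := Finset.card_filter_add_card_filter_not
        (s := (Finset.univ : Finset (α × Fin t))) (p := fun p => Sum.inr p ∈ T)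
      simp only [Finset.card_univ, Fintype.card_prod, Fintype.card_fin] at this
      rw [hN, hM]
      convert this using 2
    have hNT : N.card ≤ k := by
      rw [← hTcard]
      calc N.card = (N.image Sum.inr).card :=
            (Finset.card_image_of_injective _ Sum.inr_injective).symm
        _ ≤ T.card := Finset.card_le_card (by
            intro x hx
            simp only [Finset.mem_image, hN, Finset.mem_filter] at hx
            obtain ⟨p, ⟨_, hp⟩, rfl⟩ := hx
            exact hp)
    have harith : Fintype.card α * (t - 1) + Fintype.card α = Fintype.card α * t := by
      rw [← Nat.mul_succ]
      congr 1
      omega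
    omega
  have hmem : Fintype.card α * (t - 1) ∈ {k | ∃ S : Finset (α ⊕ α × Fin t), S.card = k ∧
      (∀ x y, C.Adj x y → ∃ v ∈ S, C.dist v x ≠ C.dist v y)} := ⟨S, hcardS, hgenS⟩
  exact le_antisymm (Nat.sInf_le hmem) (le_csInf ⟨_, hmem⟩ hlb)
end

section
/- For t = 4k + r with 0 ≤ r ≤ 3 and t ≥ 6, the local metric dimension of the wheel-like join K_1 + P_t equals k if r ∈ {0,1} and k+1 if r ∈ {2,3}. -/
open SimpleGraph

open scoped Classical

namespace Stmt10Aux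

variable {t : ℕ}

lemma adj_none (b : Fin t) : (joinK1 (pathGraph t)).Adj none (some b) := by
  rw [joinK1, fromRel_adj]
  exact ⟨by simp, Or.inl trivial⟩

lemma adj_some_some {a b : Fin t} :
    (joinK1 (pathGraph t)).Adj (some a) (some b) ↔
      (a.val + 1 = b.val ∨ b.val + 1 = a.val) := by
  rw [joinK1, fromRel_adj]
  simp only [ne_eq, Option.some.injEq, Fin.ext_iff, pathGraph_adj]
  omega

lemma fan_dist (x y : Option (Fin t)) :
    (joinK1 (pathGraph t)).dist x y =
      if x = y then 0 else if (joinK1 (pathGraph t)).Adj x y then 1 else 2 := by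
  split_ifs with h1 h2
  · subst h1; exact dist_self
  · exact dist_eq_one_iff_adj.mpr h2
  ·
    match x, y with
    | none, none => exact absurd rfl h1
    | none, some b => exact absurd (adj_none b) h2
    | some a, none => exact absurd (adj_none a).symm h2
    | some a, some b =>
      have hle : (joinK1 (pathGraph t)).dist (some a) (some b) ≤ 2 :=
        dist_le (Walk.cons (adj_none a).symm (Walk.cons (adj_none b) Walk.nil))
      have h0 : (joinK1 (pathGraph t)).dist (some a) (some b) ≠ 0 := by
        rw [ne_eq, dist_eq_zero_iff_eq_or_not_reachable]
        push_neg
        exact ⟨h1, ⟨Walk.cons (adj_none a).symm (Walk.cons (adj_none b) Walk.nil)⟩⟩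
      have hne1 : (joinK1 (pathGraph t)).dist (some a) (some b) ≠ 1 :=
        fun h => h2 (dist_eq_one_iff_adj.mp h)
      omega

lemma dist_some (j i : Fin t) :
    (joinK1 (pathGraph t)).dist (some j) (some i) =
      if j.val = i.val then 0
      else if (j.val + 1 = i.val ∨ i.val + 1 = j.val) then 1 else 2 := by
  by_cases h1 : j.val = i.val
  · rw [fan_dist, if_pos (by simpa [Fin.ext_iff] using h1), if_pos h1]
  · by_cases h2 : j.val + 1 = i.val ∨ i.val + 1 = j.val
    · rw [fan_dist, if_neg (by simpa [Fin.ext_iff] using h1),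
        if_pos (adj_some_some.mpr h2), if_neg h1, if_pos h2]
    · rw [fan_dist, if_neg (by simpa [Fin.ext_iff] using h1),
        if_neg (fun h => h2 (adj_some_some.mp h)), if_neg h1, if_neg h2]

lemma dist_some_none (j : Fin t) :
    (joinK1 (pathGraph t)).dist (some j) none = 1 :=
  dist_eq_one_iff_adj.mpr (adj_none j).symm

lemma dist_none_some (i : Fin t) :
    (joinK1 (pathGraph t)).dist none (some i) = 1 :=
  dist_eq_one_iff_adj.mpr (adj_none i)

lemma lower (ht : 6 ≤ t) (S : Finset (Option (Fin t)))
    (hS : IsLocalMetricGenerator (joinK1 (pathGraph t)) ↑S) :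
    (t + 2) / 4 ≤ S.card := by
  classical
  set cover : Option (Fin t) → Finset ℕ := fun v => match v with
    | none => ∅
    | some j => (Finset.range (t - 1)).filter (fun i => i ≤ j.val + 1 ∧ j.val ≤ i + 2)
    with hcover
  have hsub : Finset.range (t - 1) ⊆ S.biUnion cover := by
    intro i hi
    rw [Finset.mem_range] at hi
    have hi1 : i + 1 < t := by omega
    have hadj : (joinK1 (pathGraph t)).Adj (some ⟨i, by omega⟩) (some ⟨i + 1, hi1⟩) :=
      adj_some_some.mpr (Or.inl rfl)
    obtain ⟨v, hv, hne⟩ := hS _ _ hadj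
    rw [Finset.mem_coe] at hv
    match v with
    | none => exact absurd (by rw [dist_none_some, dist_none_some]) hne
    | some j =>
      refine Finset.mem_biUnion.mpr ⟨some j, hv, ?_⟩
      simp only [hcover, Finset.mem_filter, Finset.mem_range]
      refine ⟨hi, ?_⟩
      by_contra hcon
      apply hne
      rw [dist_some, dist_some]
      simp only [Fin.val_mk]
      split_ifs <;> omega
  have hcard : ∀ v ∈ S, (cover v).card ≤ 4 := by
    intro v _
    match v with
    | none => simp [hcover]
    | some j =>
      have hsub2 : cover (some j) ⊆ Finset.Icc (j.val - 2) (j.val + 1) := by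
        intro i hi
        simp only [hcover, Finset.mem_filter, Finset.mem_range] at hi
        rw [Finset.mem_Icc]
        omega
      calc (cover (some j)).card ≤ (Finset.Icc (j.val - 2) (j.val + 1)).card :=
            Finset.card_le_card hsub2
        _ ≤ 4 := by rw [Nat.card_Icc]; omega
  have hmain : t - 1 ≤ 4 * S.card := by
    calc t - 1 = (Finset.range (t - 1)).card := (Finset.card_range _).symm
      _ ≤ (S.biUnion cover).card := Finset.card_le_card hsub
      _ ≤ ∑ v ∈ S, (cover v).card := Finset.card_biUnion_le
      _ ≤ ∑ _v ∈ S, 4 := Finset.sum_le_sum hcard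
      _ = 4 * S.card := by rw [Finset.sum_const, smul_eq_mul, mul_comm]
  omega

lemma upper (ht : 6 ≤ t) :
    ∃ S : Finset (Option (Fin t)), S.card = (t + 2) / 4 ∧
      IsLocalMetricGenerator (joinK1 (pathGraph t)) ↑S := by
  classical
  have hgt : ∀ m : ℕ, min (4 * m + 2) (t - 1) < t := by
    intro m
    have := min_le_right (4 * m + 2) (t - 1)
    omega
  set S : Finset (Option (Fin t)) :=
    (Finset.range ((t + 2) / 4)).image
      (fun m => some (⟨min (4 * m + 2) (t - 1), hgt m⟩ : Fin t)) with hSdef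
  have hmem : ∀ m < (t + 2) / 4,
      (some (⟨min (4 * m + 2) (t - 1), hgt m⟩ : Fin t) : Option (Fin t)) ∈ S := by
    intro m hm
    rw [hSdef]
    exact Finset.mem_image.mpr ⟨m, Finset.mem_range.mpr hm, rfl⟩
  have hcard : S.card = (t + 2) / 4 := by
    rw [hSdef, Finset.card_image_of_injOn, Finset.card_range]
    intro m1 h1 m2 h2 heq
    rw [Finset.mem_coe, Finset.mem_range] at h1 h2
    simp only [Option.some.injEq, Fin.mk.injEq] at heq
    omega
  -- key: distinguishing a path edge
  have hedge : ∀ a b : Fin t, a.val + 1 = b.val →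
      ∃ v ∈ (↑S : Set (Option (Fin t))),
        (joinK1 (pathGraph t)).dist v (some a) ≠ (joinK1 (pathGraph t)).dist v (some b) := by
    intro a b hab
    have hb := b.isLt
    have hm : a.val / 4 < (t + 2) / 4 := by omega
    refine ⟨_, hmem (a.val / 4) hm, ?_⟩
    rw [dist_some, dist_some]
    simp only [Fin.val_mk]
    split_ifs <;> omega
  -- key: distinguishing a hub edge
  have hhub : ∀ b : Fin t,
      ∃ v ∈ (↑S : Set (Option (Fin t))),
        (joinK1 (pathGraph t)).dist v none ≠ (joinK1 (pathGraph t)).dist v (some b) := by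
    intro b
    by_cases hb : b.val = 1 ∨ b.val = 3
    · have h1 : (1 : ℕ) < (t + 2) / 4 := by omega
      refine ⟨_, hmem 1 h1, ?_⟩
      rw [dist_some_none, dist_some]
      simp only [Fin.val_mk]
      split_ifs <;> omega
    · have h0 : (0 : ℕ) < (t + 2) / 4 := by omega
      refine ⟨_, hmem 0 h0, ?_⟩
      rw [dist_some_none, dist_some]
      simp only [Fin.val_mk]
      split_ifs <;> omega
  refine ⟨S, hcard, ?_⟩
  intro x y hadj
  match x, y with
  | none, none => exact absurd rfl hadj.ne
  | none, some b => exact hhub b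
  | some b, none =>
    obtain ⟨v, hv, hne⟩ := hhub b
    exact ⟨v, hv, hne.symm⟩
  | some a, some b =>
    rcases adj_some_some.mp hadj with h | h
    · exact hedge a b h
    · obtain ⟨v, hv, hne⟩ := hedge b a h
      exact ⟨v, hv, hne.symm⟩

lemma fan_dim (ht : 6 ≤ t) :
    localMetricDim (joinK1 (pathGraph t)) = (t + 2) / 4 := by
  obtain ⟨S, hcard, hgen⟩ := upper ht
  refine le_antisymm (Nat.sInf_le ⟨S, hcard, hgen⟩) ?_
  refine le_csInf ⟨_, S, hcard, hgen⟩ ?_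
  rintro n ⟨T, hT, hTgen⟩
  exact hT ▸ lower ht T hTgen

end Stmt10Aux

/-- For `t = 4k + r`, `0 ≤ r ≤ 3`, `t ≥ 6`,
`dim_l (K₁ + P_t) = k` if `r ∈ {0,1}` and `k + 1` if `r ∈ {2,3}`. -/
theorem stmt10 (k r t : ℕ) (htk : t = 4 * k + r) (hr : r ≤ 3) (ht : 6 ≤ t) :
    localMetricDim (joinK1 (SimpleGraph.pathGraph t)) = if r ≤ 1 then k else k + 1 := by
  rw [Stmt10Aux.fan_dim ht]
  split_ifs with h <;> omega
end

section
/- For t = 4k + r with 0 ≤ r ≤ 3 and t ≥ 6, the local metric dimension of the wheel K_1 + C_t equals k if r = 0 and k+1 otherwise. -/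
open SimpleGraph
open scoped Fin.NatCast Fin.CommRing

namespace Scratch

lemma fin_natCast_inj {n : ℕ} (a b : ℕ) (ha : a < n+2) (hb : b < n+2)
    (h : ((a:ℕ) : Fin (n+2)) = ((b:ℕ) : Fin (n+2))) : a = b := by
  have := congrArg Fin.val h
  rwa [Fin.val_natCast, Fin.val_natCast, Nat.mod_eq_of_lt ha, Nat.mod_eq_of_lt hb] at this

lemma fin_natCast_eq {n : ℕ} (a b : ℕ) (h : a % (n+2) = b % (n+2)) :
    ((a:ℕ) : Fin (n+2)) = ((b:ℕ) : Fin (n+2)) := by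
  apply Fin.ext
  rw [Fin.val_natCast, Fin.val_natCast]
  exact h

section Join
variable {β : Type*} {H : SimpleGraph β}

lemma adj_ns (b : β) : (joinK1 H).Adj none (some b) := by
  simp [joinK1, SimpleGraph.fromRel_adj]

lemma adj_sn (a : β) : (joinK1 H).Adj (some a) none := (adj_ns a).symm

lemma adj_ss {a b : β} : (joinK1 H).Adj (some a) (some b) ↔ H.Adj a b := by
  constructor
  · rintro ⟨hne, h | h⟩
    · exact h
    · exact h.symm
  · intro h
    exact ⟨by simpa using h.ne, Or.inl h⟩

open Classical in
lemma joinK1_dist (x y : Option β) :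
    (joinK1 H).dist x y = if x = y then 0 else if (joinK1 H).Adj x y then 1 else 2 := by
  split_ifs with h1 h2
  · simp [h1]
  · exact (SimpleGraph.dist_eq_one_iff_adj).mpr h2
  · match x, y with
    | none, none => exact absurd rfl h1
    | none, some b => exact absurd (adj_ns b) h2
    | some a, none => exact absurd (adj_sn a) h2
    | some a, some b =>
      have hle := SimpleGraph.dist_le (G := joinK1 H)
        (SimpleGraph.Walk.cons (adj_sn (H := H) a) (SimpleGraph.Walk.cons (adj_ns b) SimpleGraph.Walk.nil))
      simp only [SimpleGraph.Walk.length_cons, SimpleGraph.Walk.length_nil] at hle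
      have h0 : (joinK1 H).dist (some a) (some b) ≠ 0 := by
        simp only [ne_eq, SimpleGraph.dist_eq_zero_iff_eq_or_not_reachable]
        push_neg
        exact ⟨h1, ⟨SimpleGraph.Walk.cons (adj_sn (H := H) a)
          (SimpleGraph.Walk.cons (adj_ns b) SimpleGraph.Walk.nil)⟩⟩
      have hne1 : (joinK1 H).dist (some a) (some b) ≠ 1 := by
        simp only [ne_eq, SimpleGraph.dist_eq_one_iff_adj]
        exact h2
      omega

lemma dist_adj {x y : Option β} (h : (joinK1 H).Adj x y) : (joinK1 H).dist x y = 1 :=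
  SimpleGraph.dist_eq_one_iff_adj.mpr h

lemma dist_nadj {x y : Option β} (h1 : x ≠ y) (h2 : ¬(joinK1 H).Adj x y) :
    (joinK1 H).dist x y = 2 := by
  rw [joinK1_dist, if_neg h1, if_neg h2]

end Join

section Cycle
variable {n : ℕ}

abbrev windowCond (S : Finset (Fin (n+2))) : Prop :=
  ∀ i : Fin (n+2), ∃ s ∈ S, s = i - 1 ∨ s = i ∨ s = i + 1 ∨ s = i + 2

abbrev hubCond (S : Finset (Fin (n+2))) : Prop :=
  ∀ x : Fin (n+2), ∃ s ∈ S, ¬(cycleGraph (n+2)).Adj s x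

/- small numeric facts in `Fin (n+2)` for `4 ≤ n` -/
lemma f10 (hn : 4 ≤ n) : (1 : Fin (n+2)) ≠ 0 := by
  intro h
  have h2 : ((1:ℕ) : Fin (n+2)) = ((0:ℕ) : Fin (n+2)) := by push_cast; exact h
  have := fin_natCast_inj 1 0 (by omega) (by omega) h2
  omega

lemma f20 (hn : 4 ≤ n) : (2 : Fin (n+2)) ≠ 0 := by
  intro h
  have h2 : ((2:ℕ) : Fin (n+2)) = ((0:ℕ) : Fin (n+2)) := by push_cast; exact h
  have := fin_natCast_inj 2 0 (by omega) (by omega) h2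
  omega

lemma f30 (hn : 4 ≤ n) : (3 : Fin (n+2)) ≠ 0 := by
  intro h
  have h2 : ((3:ℕ) : Fin (n+2)) = ((0:ℕ) : Fin (n+2)) := by push_cast; exact h
  have := fin_natCast_inj 3 0 (by omega) (by omega) h2
  omega

lemma f21 (hn : 4 ≤ n) : (2 : Fin (n+2)) ≠ 1 := by
  intro h
  have h2 : ((2:ℕ) : Fin (n+2)) = ((1:ℕ) : Fin (n+2)) := by push_cast; exact h
  have := fin_natCast_inj 2 1 (by omega) (by omega) h2
  omega

abbrev W (n : ℕ) : SimpleGraph (Option (Fin (n+2))) := joinK1 (cycleGraph (n+2))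

lemma cyc_adj_succ (i : Fin (n+2)) : (cycleGraph (n+2)).Adj i (i+1) :=
  cycleGraph_adj.mpr (Or.inr (by ring))

/-- an element of the window distinguishes the edge `(i, i+1)` -/
lemma window_distinguishes (hn : 4 ≤ n) {s i : Fin (n+2)}
    (hc : s = i - 1 ∨ s = i ∨ s = i + 1 ∨ s = i + 2) :
    (W n).dist (some s) (some i) ≠ (W n).dist (some s) (some (i+1)) := by
  have hii : i ≠ i + 1 := by
    intro h
    exact f10 hn (by linear_combination -h)
  rcases hc with hc | hc | hc | hc
  · have e1 : (W n).dist (some s) (some i) = 1 :=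
      dist_adj (adj_ss.mpr (cycleGraph_adj.mpr (Or.inr (by rw [hc]; ring))))
    have e2 : (W n).dist (some s) (some (i+1)) = 2 := by
      apply dist_nadj
      · intro h
        have h' : s = i + 1 := by injection h
        exact f20 hn (by linear_combination hc - h')
      · intro hadj
        rcases cycleGraph_adj.mp (adj_ss.mp hadj) with hd | hd
        · exact f30 hn (by linear_combination hc - hd)
        · exact f21 hn (by linear_combination hd + hc)
    rw [e1, e2]; omega
  · have e1 : (W n).dist (some s) (some i) = 0 := by rw [hc]; exact SimpleGraph.dist_self
    have e2 : (W n).dist (some s) (some (i+1)) ≠ 0 := by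
      rw [joinK1_dist]
      have : some s ≠ some (i + 1) := by
        intro h
        have h' : s = i + 1 := by injection h
        exact f10 hn (by linear_combination hc - h')
      rw [if_neg this]
      split_ifs <;> omega
    omega
  · have e1 : (W n).dist (some s) (some i) ≠ 0 := by
      rw [joinK1_dist]
      have : some s ≠ some i := by
        intro h
        have h' : s = i := by injection h
        exact f10 hn (by linear_combination h' - hc)
      rw [if_neg this]
      split_ifs <;> omega
    have e2 : (W n).dist (some s) (some (i+1)) = 0 := by rw [hc]; exact SimpleGraph.dist_self
    omega
  · have e1 : (W n).dist (some s) (some i) = 2 := by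
      apply dist_nadj
      · intro h
        have h' : s = i := by injection h
        exact f20 hn (by linear_combination h' - hc)
      · intro hadj
        rcases cycleGraph_adj.mp (adj_ss.mp hadj) with hd | hd
        · exact f21 hn (by linear_combination hd - hc)
        · exact f30 hn (by linear_combination -hd - hc)
    have e2 : (W n).dist (some s) (some (i+1)) = 1 :=
      dist_adj (adj_ss.mpr (cycleGraph_adj.mpr (Or.inl (by rw [hc]; ring))))
    rw [e1, e2]; omega

lemma gen_of_conds (hn : 4 ≤ n) (S : Finset (Fin (n+2)))
    (ha : windowCond S) (hb : hubCond S) :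
    IsLocalMetricGenerator (W n) ↑(S.image some) := by
  have hedge : ∀ i : Fin (n+2), ∃ s ∈ S,
      (W n).dist (some s) (some i) ≠ (W n).dist (some s) (some (i+1)) := by
    intro i
    obtain ⟨s, hs, hc⟩ := ha i
    exact ⟨s, hs, window_distinguishes hn hc⟩
  have hhub : ∀ b : Fin (n+2), ∃ s ∈ S,
      (W n).dist (some s) none ≠ (W n).dist (some s) (some b) := by
    intro b
    obtain ⟨s, hs, hnadj⟩ := hb b
    refine ⟨s, hs, ?_⟩
    have e1 : (W n).dist (some s) none = 1 := dist_adj (adj_sn s)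
    by_cases hsb : s = b
    · rw [e1, hsb]
      rw [SimpleGraph.dist_self]
      omega
    · have e2 : (W n).dist (some s) (some b) = 2 :=
        dist_nadj (by simpa using hsb) (fun h => hnadj (adj_ss.mp h))
      rw [e1, e2]; omega
  intro x y hxy
  match x, y with
  | none, none => exact absurd rfl hxy.ne
  | none, some b =>
    obtain ⟨s, hs, hd⟩ := hhub b
    exact ⟨some s, by simpa using hs, hd⟩
  | some a, none =>
    obtain ⟨s, hs, hd⟩ := hhub a
    exact ⟨some s, by simpa using hs, hd.symm⟩
  | some a, some b =>
    rcases cycleGraph_adj.mp (adj_ss.mp hxy) with hd | hd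
    · -- a - b = 1, so a = b + 1
      obtain ⟨s, hs, hne⟩ := hedge b
      refine ⟨some s, by simpa using hs, ?_⟩
      have hab : a = b + 1 := by linear_combination hd
      rw [hab]
      exact hne.symm
    · -- b - a = 1, so b = a + 1
      obtain ⟨s, hs, hne⟩ := hedge a
      refine ⟨some s, by simpa using hs, ?_⟩
      have hab : b = a + 1 := by linear_combination hd
      rw [hab]
      exact hne

end Cycle
end Scratch

namespace Scratch
open Finset
variable {n : ℕ}

lemma lower_bound (hn : 4 ≤ n) (S : Finset (Option (Fin (n+2))))
    (hS : IsLocalMetricGenerator (W n) ↑S) : n + 2 ≤ 4 * S.card := by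
  classical
  set S' : Finset (Fin (n+2)) := Finset.univ.filter (fun a => some a ∈ S) with hS'
  have key : ∀ i : Fin (n+2), ∃ s, s ∈ S' ∧
      (i = s - 2 ∨ i = s - 1 ∨ i = s ∨ i = s + 1) := by
    intro i
    have hadj : (W n).Adj (some i) (some (i+1)) := adj_ss.mpr (cyc_adj_succ i)
    obtain ⟨v, hv, hd⟩ := hS _ _ hadj
    match v with
    | none =>
      exfalso
      apply hd
      rw [dist_adj (adj_ns i), dist_adj (adj_ns (i+1))]
    | some s =>
      refine ⟨s, by simp only [hS', Finset.mem_filter, Finset.mem_univ, true_and]; exact Finset.mem_coe.mp hv, ?_⟩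
      · by_contra hcon
        push_neg at hcon
        obtain ⟨c2, c1, c0, cp1⟩ := hcon
        apply hd
        have hsi : some s ≠ some i := by
          intro h; exact c0 (by injection h with h'; rw [h'])
        have hsi1 : some s ≠ some (i+1) := by
          intro h
          have h' : s = i + 1 := by injection h
          exact c1 (by linear_combination -h')
        have hna1 : ¬(W n).Adj (some s) (some i) := by
          intro h
          rcases cycleGraph_adj.mp (adj_ss.mp h) with he | he
          · exact c1 (by linear_combination -he)
          · exact cp1 (by linear_combination he)
        have hna2 : ¬(W n).Adj (some s) (some (i+1)) := by
          intro h
          rcases cycleGraph_adj.mp (adj_ss.mp h) with he | he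
          · exact c2 (by linear_combination -he)
          · exact c0 (by linear_combination he)
        rw [dist_nadj hsi hna1, dist_nadj hsi1 hna2]
  choose f hf1 hf2 using key
  have himg : Finset.univ.image f ⊆ S' := by
    intro s hs
    simp only [Finset.mem_image, Finset.mem_univ, true_and] at hs
    obtain ⟨i, rfl⟩ := hs
    exact hf1 i
  have hcard1 : (Finset.univ : Finset (Fin (n+2))).card ≤ 4 * (Finset.univ.image f).card := by
    apply Finset.card_le_mul_card_image
    intro s _
    have hsub : Finset.univ.filter (fun i => f i = s) ⊆ ({s - 2, s - 1, s, s + 1} : Finset (Fin (n+2))) := by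
      intro i hi
      simp only [Finset.mem_filter, Finset.mem_univ, true_and] at hi
      have := hf2 i
      rw [hi] at this
      simp only [Finset.mem_insert, Finset.mem_singleton]
      tauto
    refine (Finset.card_le_card hsub).trans ?_
    refine (Finset.card_insert_le _ _).trans ?_
    have : ({s - 1, s, s + 1} : Finset (Fin (n+2))).card ≤ 3 := by
      refine (Finset.card_insert_le _ _).trans ?_
      refine Nat.succ_le_succ ?_
      refine (Finset.card_insert_le _ _).trans ?_
      simp
    omega
  have hcard2 : (Finset.univ.image f).card ≤ S'.card := Finset.card_le_card himg
  have hcard3 : S'.card ≤ S.card := by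
    apply Finset.card_le_card_of_injOn some
    · intro a ha
      simp only [hS', Finset.mem_filter, Finset.mem_univ, true_and] at ha
      simpa using ha
    · exact (Option.some_injective _).injOn
  have : (Finset.univ : Finset (Fin (n+2))).card = n + 2 := by simp
  omega

end Scratch

namespace Scratch
open Finset
variable {n : ℕ}

def Sm (n m : ℕ) : Finset (Fin (n+2)) :=
  (Finset.range m).image (fun j => ((4*j : ℕ) : Fin (n+2)))

lemma Sm_card (m : ℕ) (hm' : 4 * m ≤ n + 5) : (Sm n m).card = m := by
  rw [Sm, Finset.card_image_of_injOn, Finset.card_range]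
  intro j1 h1 j2 h2 h
  simp only [Finset.coe_range, Set.mem_Iio] at h1 h2
  have := fin_natCast_inj (4*j1) (4*j2) (by omega) (by omega) h
  omega

lemma Sm_window (m : ℕ) (hm : n + 2 ≤ 4 * m) (hm' : 4 * m ≤ n + 5) :
    windowCond (Sm n m) := by
  intro i
  have hv : i.val < n + 2 := i.isLt
  have hm1 : 1 ≤ m := by omega
  have hself : ((i.val : ℕ) : Fin (n+2)) = i := Fin.cast_val_eq_self i
  have hp1 : ((i.val + 1 : ℕ) : Fin (n+2)) = i + 1 := by
    rw [Nat.cast_add, Nat.cast_one, hself]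
  have hp2 : ((i.val + 2 : ℕ) : Fin (n+2)) = i + 2 := by
    rw [Nat.cast_add, hself, Nat.cast_ofNat]
  by_cases hbig : n + 2 ≤ i.val + 2
  · -- i.val = n or n + 1 : use s = 0
    refine ⟨((4*0 : ℕ) : Fin (n+2)), Finset.mem_image_of_mem _ (Finset.mem_range.mpr hm1), ?_⟩
    by_cases htop : i.val = n + 1
    · -- s = i + 1
      right; right; left
      refine (fin_natCast_eq (4*0) (i.val + 1) ?_).trans hp1
      rw [show i.val + 1 = n + 2 by omega]
      simp [Nat.mod_self]
    · -- i.val = n : s = i + 2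
      right; right; right
      refine (fin_natCast_eq (4*0) (i.val + 2) ?_).trans hp2
      rw [show i.val + 2 = n + 2 by omega]
      simp [Nat.mod_self]
  · push_neg at hbig
    by_cases h0 : i.val = 0
    · refine ⟨((4*0 : ℕ) : Fin (n+2)), Finset.mem_image_of_mem _ (Finset.mem_range.mpr hm1), ?_⟩
      right; left
      exact (congrArg _ (by omega : 4*0 = i.val)).trans hself
    · have h1 : 1 ≤ i.val := by omega
      set j0 := (i.val + 2) / 4 with hj0
      have hj0b : i.val - 1 ≤ 4 * j0 ∧ 4 * j0 ≤ i.val + 2 := by omega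
      have hj0m : j0 < m := by omega
      refine ⟨((4*j0 : ℕ) : Fin (n+2)), Finset.mem_image_of_mem _ (Finset.mem_range.mpr hj0m), ?_⟩
      have hcases : 4*j0 = i.val - 1 ∨ 4*j0 = i.val ∨ 4*j0 = i.val + 1 ∨ 4*j0 = i.val + 2 := by
        omega
      rcases hcases with hc | hc | hc | hc
      · left
        rw [eq_sub_iff_add_eq]
        have hA : ((4*j0 : ℕ) : Fin (n+2)) + 1 = ((4*j0 + 1 : ℕ) : Fin (n+2)) := by
          push_cast; ring
        rw [hA]
        exact (congrArg _ (by omega : 4*j0 + 1 = i.val)).trans hself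
      · right; left
        exact (congrArg _ (by omega : 4*j0 = i.val)).trans hself
      · right; right; left
        exact (congrArg _ (by omega : 4*j0 = i.val + 1)).trans hp1
      · right; right; right
        exact (congrArg _ (by omega : 4*j0 = i.val + 2)).trans hp2

lemma Sm_hub (hn5 : 5 ≤ n) (m : ℕ) (hm2 : 2 ≤ m) : hubCond (Sm n m) := by
  intro x
  have h0 : ((4*0 : ℕ) : Fin (n+2)) ∈ Sm n m :=
    Finset.mem_image_of_mem _ (Finset.mem_range.mpr (by omega))
  have h4 : ((4*1 : ℕ) : Fin (n+2)) ∈ Sm n m :=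
    Finset.mem_image_of_mem _ (Finset.mem_range.mpr (by omega))
  by_cases ha0 : (cycleGraph (n+2)).Adj ((4*0 : ℕ) : Fin (n+2)) x
  · by_cases ha4 : (cycleGraph (n+2)).Adj ((4*1 : ℕ) : Fin (n+2)) x
    · exfalso
      have e0 : ((4*0 : ℕ) : Fin (n+2)) = 0 := by norm_num
      have e4 : ((4*1 : ℕ) : Fin (n+2)) = 4 := by norm_num
      rw [e0] at ha0
      rw [e4] at ha4
      have h1 : x = -1 ∨ x = 1 := by
        rcases cycleGraph_adj.mp ha0 with he | he
        · left; linear_combination -he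
        · right; linear_combination he
      have h2 : x = 3 ∨ x = 5 := by
        rcases cycleGraph_adj.mp ha4 with he | he
        · left; linear_combination -he
        · right; linear_combination he
      have contra : ∀ c : ℕ, c ≠ 0 → c < n + 2 → ((c : ℕ) : Fin (n+2)) = 0 → False := by
        intro c hc hcn h
        have h2 : ((c:ℕ) : Fin (n+2)) = ((0:ℕ) : Fin (n+2)) := by push_cast; exact h
        have := fin_natCast_inj c 0 hcn (by omega) h2
        omega
      rcases h1 with h1 | h1 <;> rcases h2 with h2 | h2
      · -- -1 = 3 → 4 = 0
        refine contra 4 (by omega) (by omega) ?_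
        push_cast
        linear_combination h1 - h2
      · -- -1 = 5 → 6 = 0
        refine contra 6 (by omega) (by omega) ?_
        push_cast
        linear_combination h1 - h2
      · -- 1 = 3 → 2 = 0
        refine contra 2 (by omega) (by omega) ?_
        push_cast
        linear_combination h1 - h2
      · -- 1 = 5 → 4 = 0
        refine contra 4 (by omega) (by omega) ?_
        push_cast
        linear_combination h1 - h2
    · exact ⟨_, h4, ha4⟩
  · exact ⟨_, h0, ha0⟩

lemma S6_window : windowCond (n := 4) ({0, 3} : Finset (Fin 6)) := by decide

lemma S6_hub : hubCond (n := 4) ({0, 3} : Finset (Fin 6)) := by decide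

lemma upper_bound (hn : 4 ≤ n) (m : ℕ) (hm1 : n + 2 ≤ 4 * m) (hm2 : 4 * m ≤ n + 5) :
    localMetricDim (W n) ≤ m := by
  rcases Nat.lt_or_ge n 5 with hn5 | hn5
  · -- n = 4, t = 6, m = 2
    have hn4 : n = 4 := by omega
    subst hn4
    have hm : m = 2 := by omega
    subst hm
    apply Nat.sInf_le
    refine ⟨(({0, 3} : Finset (Fin 6)).image some), ?_, ?_⟩
    · rw [Finset.card_image_of_injective _ (Option.some_injective _)]
      decide
    · exact gen_of_conds (le_refl 4) _ S6_window S6_hub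
  · have hm2' : 2 ≤ m := by omega
    apply Nat.sInf_le
    refine ⟨((Sm n m).image some), ?_, ?_⟩
    · rw [Finset.card_image_of_injective _ (Option.some_injective _)]
      exact Sm_card m hm2
    · exact gen_of_conds hn _ (Sm_window m hm1 hm2) (Sm_hub hn5 m hm2')

end Scratch

namespace Scratch

lemma univ_gen {α : Type*} [Fintype α] (G : SimpleGraph α) :
    IsLocalMetricGenerator G ↑(Finset.univ : Finset α) := by
  intro x y hxy
  refine ⟨x, by simp, ?_⟩
  rw [SimpleGraph.dist_self, SimpleGraph.dist_eq_one_iff_adj.mpr hxy]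
  omega

end Scratch


open Scratch

/-- For `t = 4k + r`, `0 ≤ r ≤ 3`, `t ≥ 6`,
`dim_l (K₁ + C_t) = k` if `r = 0` and `k + 1` otherwise. -/
theorem stmt11 (k r t : ℕ) (htk : t = 4 * k + r) (hr : r ≤ 3) (ht : 6 ≤ t) :
    localMetricDim (joinK1 (SimpleGraph.cycleGraph t)) = if r = 0 then k else k + 1 := by
  obtain ⟨n, rfl⟩ : ∃ n, t = n + 2 := ⟨t - 2, by omega⟩
  have hn : 4 ≤ n := by omega
  set m := if r = 0 then k else k + 1 with hmdef
  have hm1 : n + 2 ≤ 4 * m := by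
    by_cases h : r = 0 <;> simp only [hmdef, h, if_true, if_false] <;> omega
  have hm2 : 4 * m ≤ n + 5 := by
    by_cases h : r = 0 <;> simp only [hmdef, h, if_true, if_false] <;> omega
  apply le_antisymm
  · exact upper_bound hn m hm1 hm2
  · refine le_csInf ⟨(Finset.univ : Finset (Option (Fin (n+2)))).card,
      Finset.univ, rfl, univ_gen _⟩ ?_
    rintro b ⟨S, hcard, hgen⟩
    have hlow := lower_bound hn S hgen
    rw [hcard] at hlow
    by_cases h : r = 0 <;> simp only [hmdef, h, if_true, if_false] <;> omega
end
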